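/- If A and B are two (row-)stochastic matrices of the same size, then 1 - m(AB) ≤ (1 - m(A))(1 - m(B)), where for a matrix M, m(M) is defined as the sum over columns j of the minimum over rows i of the entry M_{i,j}. -/
import Mathlib


open Finset

/-- `m(M) = Σ_j min_i M_{i,j}`. -/
noncomputable def colMinSum {n : Type*} [Fintype n] [Nonempty n]
    (M : Matrix n n ℝ) : ℝ :=
  ∑ j, Finset.univ.inf' Finset.univ_nonempty (fun i => M i j)

/-- for row-stochastic matrices `A`, `B`,
`1 - m(AB) ≤ (1 - m(A))(1 - m(B))`. -/
theorem one_sub_colMinSum_mul_le {n : Type*} [Fintype n] [Nonempty n] [DecidableEq n]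
    (A B : Matrix n n ℝ)
    (hA0 : ∀ i j, 0 ≤ A i j) (hA1 : ∀ i, ∑ j, A i j = 1)
    (hB0 : ∀ i j, 0 ≤ B i j) (hB1 : ∀ i, ∑ j, B i j = 1) :
    1 - colMinSum (A * B) ≤ (1 - colMinSum A) * (1 - colMinSum B) := by
  classical
  set a : n → ℝ := fun k => Finset.univ.inf' Finset.univ_nonempty (fun i => A i k) with ha
  set b : n → ℝ := fun j => Finset.univ.inf' Finset.univ_nonempty (fun i => B i j) with hb
  have haA : ∀ i k, a k ≤ A i k := fun i k => Finset.inf'_le _ (Finset.mem_univ i)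
  have hbB : ∀ i j, b j ≤ B i j := fun i j => Finset.inf'_le _ (Finset.mem_univ i)
  have ha0 : ∀ k, 0 ≤ a k := fun k => Finset.le_inf' _ _ fun i _ => hA0 i k
  -- key pointwise bound
  have key : ∀ i j, b j + ∑ k, a k * (B k j - b j) ≤ (A * B) i j := by
    intro i j
    have hmul : (A * B) i j = ∑ k, A i k * B k j := by
      simp [Matrix.mul_apply]
    have h1 : ∑ k, A i k * B k j
        = b j + ∑ k, A i k * (B k j - b j) := by
      have : ∀ k : n, A i k * B k j = A i k * b j + A i k * (B k j - b j) := by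
        intro k; ring
      rw [Finset.sum_congr rfl fun k _ => this k, Finset.sum_add_distrib,
        ← Finset.sum_mul, hA1 i, one_mul]
    have h2 : ∑ k, a k * (B k j - b j) ≤ ∑ k, A i k * (B k j - b j) := by
      apply Finset.sum_le_sum
      intro k _
      exact mul_le_mul_of_nonneg_right (haA i k) (by linarith [hbB k j])
    rw [hmul, h1]
    linarith
  have hcol : ∀ j, b j + ∑ k, a k * (B k j - b j)
      ≤ Finset.univ.inf' Finset.univ_nonempty (fun i => (A * B) i j) := by
    intro j
    exact Finset.le_inf' _ _ fun i _ => key i j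
  have hsum : (∑ j, b j) + (∑ j, a j) * (1 - ∑ j, b j) ≤ colMinSum (A * B) := by
    have h := Finset.sum_le_sum (fun j (_ : j ∈ Finset.univ) => hcol j)
    have hrw : ∑ j, (b j + ∑ k, a k * (B k j - b j))
        = (∑ j, b j) + (∑ j, a j) * (1 - ∑ j, b j) := by
      rw [Finset.sum_add_distrib]
      congr 1
      rw [Finset.sum_comm]
      rw [Finset.sum_mul]
      apply Finset.sum_congr rfl
      intro k _
      rw [← Finset.mul_sum]
      congr 1
      rw [Finset.sum_sub_distrib, hB1 k]
    rw [hrw] at h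
    exact h
  have hA' : colMinSum A = ∑ j, a j := rfl
  have hB' : colMinSum B = ∑ j, b j := rfl
  rw [hA', hB']
  nlinarith [hsum]
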